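/- Let H be a real Hilbert space and let T₁ and T₂ be two strongly nonexpansive operators on H such that Fix(T₁) ∩ Fix(T₂) ≠ ∅. Let h : ℕ → {1,2} be a mapping such that h⁻¹({i}) is an infinite set for each i = 1, 2. Then for every x ∈ H, the sequence (P_n x)_{n=0}^∞, where P_n := T_{h(n)}∘⋯∘T_{h(0)} is the unrestricted product of {T_i}_{i=1}^2 determined by h, converges weakly to a common fixed point of T₁ and T₂. -/

import Mathlib

open Filter Topology RealInnerProductSpace

variable {H : Type*} [NormedAddCommGroup H] [InnerProductSpace ℝ H] [CompleteSpace H]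

/-- Weak convergence in a Hilbert space: `x n ⇀ p`. -/
def WeakConvergesTo (x : ℕ → H) (p : H) : Prop :=
  ∀ y : H, Tendsto (fun n => ⟪x n, y⟫) atTop (𝓝 ⟪p, y⟫)

/-- `compSeq n g = g (n-1) ∘ ⋯ ∘ g 0` (the identity when `n = 0`). -/
def compSeq {α : Type*} : ℕ → (ℕ → α → α) → (α → α)
  | 0, _ => id
  | n + 1, g => g n ∘ compSeq n g

/-- `P` is the metric projection onto `C`. -/
def IsProjOn (C : Set H) (P : H → H) : Prop :=
  ∀ x, P x ∈ C ∧ ∀ y ∈ C, ‖x - P x‖ ≤ ‖x - y‖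

/-- Nonexpansive operator. -/
def Nonexpansive (T : H → H) : Prop := ∀ x y, ‖T x - T y‖ ≤ ‖x - y‖

/-- Condition (S). -/
def CondS (T : H → H) : Prop :=
  ∀ x y : ℕ → H, (∃ c, ∀ n, ‖x n - y n‖ ≤ c) →
    Tendsto (fun n => ‖x n - y n‖ - ‖T (x n) - T (y n)‖) atTop (𝓝 0) →
    Tendsto (fun n => x n - y n - (T (x n) - T (y n))) atTop (𝓝 (0 : H))

/-- Strongly nonexpansive operator. -/
def StronglyNonexpansive (T : H → H) : Prop := Nonexpansive T ∧ CondS T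

/-- Firmly nonexpansive operator. -/
def FirmlyNonexpansive (T : H → H) : Prop :=
  ∀ x y, ‖T x - T y‖ ^ 2 ≤ ⟪T x - T y, x - y⟫

/-- Averaged operator. -/
def Averaged (T : H → H) : Prop :=
  ∃ lam ∈ Set.Ioo (0 : ℝ) 1, ∃ U : H → H, Nonexpansive U ∧
    T = fun x => (1 - lam) • x + lam • U x

/-- The unrestricted `r`-set Douglas–Rachford operators `S n` associated with projections
`proj i` onto the sets `C i`, indices chosen by `f`: `S n = 2⁻¹ (Id + R_{C_{f((r-1)n+r-1)}} ∘ ⋯ ∘ R_{C_{f((r-1)n)}})`. -/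
noncomputable def drS (proj : ℕ → H → H) (r : ℕ) (f : ℕ → ℕ) (n : ℕ) : H → H :=
  fun x => (2⁻¹ : ℝ) • (x + compSeq r (fun j y => (2 : ℝ) • proj (f ((r - 1) * n + j)) y - y) x)

section Helpers

omit [CompleteSpace H] in
lemma expand_sq (a b q : H) :
    ‖a - q‖ ^ 2 = ‖a - b‖ ^ 2 + 2 * ⟪a - b, b - q⟫ + ‖b - q‖ ^ 2 := by
  have e : a - q = (a - b) + (b - q) := by abel
  rw [e, norm_add_sq_real]

lemma exists_weak_lim (u : ℕ → H) (C : ℝ) (hb : ∀ n, ‖u n‖ ≤ C) (𝒰 : Ultrafilter ℕ) :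
    ∃ p : H, ∀ y : H, Tendsto (fun n => ⟪u n, y⟫) (𝒰 : Filter ℕ) (𝓝 ⟪p, y⟫) := by
  have hex : ∀ y : H, ∃ a : ℝ, a ∈ Set.Icc (-(C * ‖y‖)) (C * ‖y‖) ∧
      Tendsto (fun n => ⟪u n, y⟫) (𝒰 : Filter ℕ) (𝓝 a) := by
    intro y
    have hmem : ∀ n, ⟪u n, y⟫ ∈ Set.Icc (-(C * ‖y‖)) (C * ‖y‖) := by
      intro n
      have h1 := abs_real_inner_le_norm (u n) y
      have h2 : ‖u n‖ * ‖y‖ ≤ C * ‖y‖ :=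
        mul_le_mul_of_nonneg_right (hb n) (norm_nonneg y)
      have := abs_le.mp (h1.trans h2)
      exact ⟨by linarith [this.1], this.2⟩
    have hle : ↑(𝒰.map fun n => ⟪u n, y⟫) ≤ 𝓟 (Set.Icc (-(C * ‖y‖)) (C * ‖y‖)) := by
      rw [le_principal_iff, Ultrafilter.coe_map, Filter.mem_map]
      exact Filter.univ_mem' hmem
    obtain ⟨a, ha, hlim⟩ := (isCompact_Icc).ultrafilter_le_nhds _ hle
    rw [Ultrafilter.coe_map] at hlim
    exact ⟨a, ha, hlim⟩
  choose φ hmemφ hφ using hex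
  have hadd : ∀ y z : H, φ (y + z) = φ y + φ z := by
    intro y z
    refine tendsto_nhds_unique (hφ (y + z)) ?_
    have := (hφ y).add (hφ z)
    refine this.congr fun n => ?_
    rw [inner_add_right]
  have hsmul : ∀ (c : ℝ) (y : H), φ (c • y) = c * φ y := by
    intro c y
    refine tendsto_nhds_unique (hφ (c • y)) ?_
    have := (hφ y).const_mul c
    refine this.congr fun n => ?_
    rw [real_inner_smul_right]
  let L : H →ₗ[ℝ] ℝ :=
    { toFun := φ, map_add' := hadd, map_smul' := hsmul }
  have hLb : ∀ y : H, ‖L y‖ ≤ C * ‖y‖ := by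
    intro y
    have h0 := hmemφ y
    have : |φ y| ≤ C * ‖y‖ := abs_le.mpr ⟨by linarith [h0.1], h0.2⟩
    simpa [L] using this
  let f : H →L[ℝ] ℝ := L.mkContinuous C hLb
  refine ⟨(InnerProductSpace.toDual ℝ H).symm f, fun y => ?_⟩
  have e1 : ⟪(InnerProductSpace.toDual ℝ H).symm f, y⟫ = f y :=
    InnerProductSpace.toDual_symm_apply
  have e2 : f y = φ y := LinearMap.mkContinuous_apply _ _ _ _
  rw [e1, e2]
  exact hφ y

omit [CompleteSpace H] in
lemma demiclosed (T : H → H) (hT : Nonexpansive T) (q : H) (u : ℕ → H) (C : ℝ)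
    (hb : ∀ n, ‖u n - q‖ ≤ C)
    (l : Filter ℕ) [l.NeBot]
    (hw : ∀ y : H, Tendsto (fun n => ⟪u n, y⟫) l (𝓝 ⟪q, y⟫))
    (hf : Tendsto (fun n => ‖u n - T (u n)‖) l (𝓝 0)) : T q = q := by
  set δ : ℕ → ℝ := fun n => ‖u n - T (u n)‖ with hδ
  have key : ∀ n, ‖q - T q‖ ^ 2 ≤ δ n ^ 2 + 2 * δ n * C + (-2) * ⟪u n - q, q - T q⟫ := by
    intro n
    have e1 := expand_sq (u n) q (T q)
    have e2 : ‖u n - T q‖ ≤ δ n + ‖u n - q‖ := by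
      calc ‖u n - T q‖ ≤ ‖u n - T (u n)‖ + ‖T (u n) - T q‖ :=
            norm_sub_le_norm_sub_add_norm_sub _ _ _
        _ ≤ δ n + ‖u n - q‖ := add_le_add le_rfl (hT _ _)
    have e3 : ‖u n - T q‖ ^ 2 ≤ (δ n + ‖u n - q‖) ^ 2 :=
      pow_le_pow_left₀ (norm_nonneg _) e2 2
    have e4 : δ n * ‖u n - q‖ ≤ δ n * C :=
      mul_le_mul_of_nonneg_left (hb n) (norm_nonneg _)
    nlinarith [e1, e3, e4]
  have hinner : Tendsto (fun n => ⟪u n - q, q - T q⟫) l (𝓝 0) := by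
    have h0 : Tendsto (fun n => ⟪u n, q - T q⟫ - ⟪q, q - T q⟫) l (𝓝 0) := by
      simpa using (hw (q - T q)).sub_const ⟪q, q - T q⟫
    exact h0.congr fun n => (inner_sub_left _ _ _).symm
  have hrhs : Tendsto (fun n => δ n ^ 2 + 2 * δ n * C + (-2) * ⟪u n - q, q - T q⟫) l (𝓝 0) := by
    have h1 : Tendsto (fun n => δ n ^ 2) l (𝓝 0) := by simpa using hf.pow 2
    have h2 : Tendsto (fun n => 2 * δ n * C) l (𝓝 0) := by
      have := (hf.const_mul 2).mul_const C
      simpa [mul_assoc] using this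
    have h3 := hinner.const_mul (-2)
    have := (h1.add h2).add h3
    simpa using this
  have hle : ‖q - T q‖ ^ 2 ≤ 0 := ge_of_tendsto hrhs (Filter.Eventually.of_forall key)
  have h0 : ‖q - T q‖ = 0 := by nlinarith [norm_nonneg (q - T q)]
  have h1 : q - T q = 0 := norm_eq_zero.mp h0
  have h2 := sub_eq_zero.mp h1
  exact h2.symm

end Helpers

/-- Theorem 2.12: unrestricted products of two strongly nonexpansive operators,
each appearing infinitely often, converge weakly to a common fixed point. -/
theorem stmt12
    (T : ℕ → H → H)
    (hT1 : StronglyNonexpansive (T 1)) (hT2 : StronglyNonexpansive (T 2))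
    (hfix : ∃ z : H, T 1 z = z ∧ T 2 z = z)
    (h : ℕ → ℕ) (hrange : ∀ n : ℕ, h n = 1 ∨ h n = 2)
    (hinf1 : {n : ℕ | h n = 1}.Infinite) (hinf2 : {n : ℕ | h n = 2}.Infinite)
    (x : H) :
    ∃ p, (T 1 p = p ∧ T 2 p = p) ∧
      WeakConvergesTo (fun n => compSeq (n + 1) (fun i => T (h i)) x) p := by
  classical
  obtain ⟨z, hz1, hz2⟩ := hfix
  set seq : ℕ → H := fun n => compSeq n (fun i => T (h i)) x with hseqdef
  have hseq : ∀ n, seq (n + 1) = T (h n) (seq n) := fun n => rfl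
  have hTne : ∀ i, i = 1 ∨ i = 2 → Nonexpansive (T i) := by
    rintro i (rfl | rfl)
    exacts [hT1.1, hT2.1]
  have hTfix : ∀ w : H, T 1 w = w → T 2 w = w → ∀ i, i = 1 ∨ i = 2 → T i w = w := by
    rintro w w1 w2 i (rfl | rfl)
    exacts [w1, w2]
  have hfejer : ∀ w : H, T 1 w = w → T 2 w = w → ∀ n, ‖seq (n + 1) - w‖ ≤ ‖seq n - w‖ := by
    intro w w1 w2 n
    rw [hseq n]
    calc ‖T (h n) (seq n) - w‖ = ‖T (h n) (seq n) - T (h n) w‖ := by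
          rw [hTfix w w1 w2 (h n) (hrange n)]
      _ ≤ ‖seq n - w‖ := hTne (h n) (hrange n) _ _
  have hanti : ∀ w : H, T 1 w = w → T 2 w = w → Antitone fun n => ‖seq n - w‖ :=
    fun w w1 w2 => antitone_nat_of_succ_le (hfejer w w1 w2)
  have hdist : ∀ w : H, T 1 w = w → T 2 w = w →
      ∃ c : ℝ, Tendsto (fun n => ‖seq n - w‖) atTop (𝓝 c) := by
    intro w w1 w2
    refine ⟨_, tendsto_atTop_ciInf (hanti w w1 w2) ⟨0, ?_⟩⟩
    rintro r ⟨n, rfl⟩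
    exact norm_nonneg _
  set C : ℝ := ‖seq 0 - z‖ + ‖z‖ with hCdef
  have hC : ∀ n, ‖seq n‖ ≤ C := by
    intro n
    have h1 : ‖seq n - z‖ ≤ ‖seq 0 - z‖ := hanti z hz1 hz2 (Nat.zero_le n)
    calc ‖seq n‖ = ‖seq n - z + z‖ := by rw [sub_add_cancel]
      _ ≤ ‖seq n - z‖ + ‖z‖ := norm_add_le _ _
      _ ≤ C := add_le_add h1 le_rfl
  -- step displacements tend to zero
  have hDi : ∀ i : ℕ, i = 1 ∨ i = 2 →
      Tendsto (fun k => seq (Nat.nth (fun n => h n = i) k + 1) -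
        seq (Nat.nth (fun n => h n = i) k)) atTop (𝓝 0) := by
    intro i hi
    have hinf : (setOf fun n => h n = i).Infinite := by
      rcases hi with rfl | rfl
      exacts [hinf1, hinf2]
    have hsm := Nat.nth_strictMono hinf
    have hmem : ∀ k, h (Nat.nth (fun n => h n = i) k) = i :=
      fun k => Nat.nth_mem_of_infinite hinf k
    obtain ⟨c, hc⟩ := hdist z hz1 hz2
    have hSc : CondS (T i) := by
      rcases hi with rfl | rfl
      exacts [hT1.2, hT2.2]
    have hTz : T i z = z := hTfix z hz1 hz2 i hi
    have hstep : ∀ k, T i (seq (Nat.nth (fun n => h n = i) k)) =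
        seq (Nat.nth (fun n => h n = i) k + 1) := by
      intro k
      rw [hseq, hmem k]
    have hb : ∃ c', ∀ k, ‖seq (Nat.nth (fun n => h n = i) k) - (fun _ => z) k‖ ≤ c' :=
      ⟨‖seq 0 - z‖, fun k => hanti z hz1 hz2 (Nat.zero_le _)⟩
    have hpre : Tendsto (fun k => ‖seq (Nat.nth (fun n => h n = i) k) - (fun _ => z) k‖ -
        ‖T i (seq (Nat.nth (fun n => h n = i) k)) - T i ((fun _ => z) k)‖) atTop (𝓝 0) := by
      have h1 : Tendsto (fun k => ‖seq (Nat.nth (fun n => h n = i) k) - z‖) atTop (𝓝 c) :=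
        hc.comp hsm.tendsto_atTop
      have h2 : Tendsto (fun k => ‖seq (Nat.nth (fun n => h n = i) k + 1) - z‖) atTop (𝓝 c) :=
        hc.comp (tendsto_atTop_mono (fun k => Nat.le_succ _) hsm.tendsto_atTop)
      have h3 := h1.sub h2
      rw [sub_self] at h3
      refine h3.congr fun k => ?_
      rw [hstep k, hTz]
    have h4 := hSc (fun k => seq (Nat.nth (fun n => h n = i) k)) (fun _ => z) hb hpre
    have h5 : Tendsto (fun k => seq (Nat.nth (fun n => h n = i) k) -
        seq (Nat.nth (fun n => h n = i) k + 1)) atTop (𝓝 0) := by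
      refine h4.congr fun k => ?_
      rw [hstep k, hTz]
      abel
    have h6 := h5.neg
    rw [neg_zero] at h6
    refine h6.congr fun k => ?_
    abel
  have hD : Tendsto (fun n => seq (n + 1) - seq n) atTop (𝓝 0) := by
    rw [Metric.tendsto_atTop]
    intro ε hε
    obtain ⟨K₁, hK₁⟩ := Metric.tendsto_atTop.mp (hDi 1 (Or.inl rfl)) ε hε
    obtain ⟨K₂, hK₂⟩ := Metric.tendsto_atTop.mp (hDi 2 (Or.inr rfl)) ε hε
    refine ⟨max (Nat.nth (fun n => h n = 1) K₁) (Nat.nth (fun n => h n = 2) K₂) + 1,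
      fun n hn => ?_⟩
    rcases hrange n with e | e
    · have hnth : Nat.nth (fun m => h m = 1) (Nat.count (fun m => h m = 1) n) = n :=
        Nat.nth_count e
      have hk : K₁ ≤ Nat.count (fun m => h m = 1) n := by
        by_contra hlt
        push_neg at hlt
        have h7 := (Nat.nth_strictMono hinf1) hlt
        rw [hnth] at h7
        have h8 := le_max_left (Nat.nth (fun n => h n = 1) K₁) (Nat.nth (fun n => h n = 2) K₂)
        omega
      have := hK₁ _ hk
      rwa [hnth] at this
    · have hnth : Nat.nth (fun m => h m = 2) (Nat.count (fun m => h m = 2) n) = n :=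
        Nat.nth_count e
      have hk : K₂ ≤ Nat.count (fun m => h m = 2) n := by
        by_contra hlt
        push_neg at hlt
        have h7 := (Nat.nth_strictMono hinf2) hlt
        rw [hnth] at h7
        have h8 := le_max_right (Nat.nth (fun n => h n = 1) K₁) (Nat.nth (fun n => h n = 2) K₂)
        omega
      have := hK₂ _ hk
      rwa [hnth] at this
  -- the "next change of operator" function
  have hex_ne : ∀ n : ℕ, ∃ m, n < m ∧ h m ≠ h n := by
    intro n
    rcases hrange n with e | e
    · obtain ⟨m, hm2, hmgt⟩ := hinf2.exists_gt n
      rw [Set.mem_setOf_eq] at hm2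
      exact ⟨m, hmgt, by omega⟩
    · obtain ⟨m, hm1, hmgt⟩ := hinf1.exists_gt n
      rw [Set.mem_setOf_eq] at hm1
      exact ⟨m, hmgt, by omega⟩
  set mf : ℕ → ℕ := fun n => Nat.find (hex_ne n) with hmfdef
  have hmf_spec : ∀ n, n < mf n ∧ h (mf n) ≠ h n := fun n => Nat.find_spec (hex_ne n)
  have hmf_block : ∀ n j, n ≤ j → j < mf n → h j = h n := by
    intro n j h1 h2
    rcases eq_or_lt_of_le h1 with rfl | hlt
    · rfl
    · by_contra hne
      exact Nat.find_min (hex_ne n) h2 ⟨hlt, hne⟩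
  have hmf_tendsto : Tendsto mf atTop atTop :=
    tendsto_atTop_mono (fun n => (hmf_spec n).1.le) tendsto_id
  have hmf1_tendsto : Tendsto (fun n => mf n - 1) atTop atTop :=
    tendsto_atTop_mono (fun n => by have := (hmf_spec n).1; simp only [id_eq]; omega) tendsto_id
  -- block monotonicity
  have block_mono : ∀ (q : H) (i : ℕ), T i q = q → ∀ m n : ℕ, n ≤ m →
      (∀ j, n ≤ j → j < m → h j = i) → ‖seq m - q‖ ≤ ‖seq n - q‖ := by
    intro q i hq m
    induction m with
    | zero =>
      intro n h0 _
      have : n = 0 := Nat.le_zero.mp h0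
      rw [this]
    | succ m ih =>
      intro n hnm hblock
      rcases eq_or_lt_of_le hnm with he | hlt
      · exact le_of_eq (by rw [he])
      · have hn_m : n ≤ m := Nat.lt_succ_iff.mp hlt
        have hm_i : h m = i := hblock m hn_m (Nat.lt_succ_self m)
        have hstep : ‖seq (m + 1) - q‖ ≤ ‖seq m - q‖ := by
          rw [hseq m]
          calc ‖T (h m) (seq m) - q‖ = ‖T (h m) (seq m) - T (h m) q‖ := by rw [hm_i, hq]
            _ ≤ ‖seq m - q‖ := hTne (h m) (hrange m) _ _
        exact hstep.trans (ih n hn_m fun j hj1 hj2 => hblock j hj1 (hj2.trans (Nat.lt_succ_self m)))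
  -- displacements at transition points
  have hD1 : Tendsto (fun n => ‖seq (mf n) - seq (mf n - 1)‖) atTop (𝓝 0) := by
    have h1 := (hD.comp hmf1_tendsto).norm
    rw [norm_zero] at h1
    refine h1.congr fun n => ?_
    have h2 : mf n - 1 + 1 = mf n := by have := (hmf_spec n).1; omega
    show ‖seq (mf n - 1 + 1) - seq (mf n - 1)‖ = ‖seq (mf n) - seq (mf n - 1)‖
    rw [h2]
  have hD2 : Tendsto (fun n => ‖seq (mf n + 1) - seq (mf n)‖) atTop (𝓝 0) := by
    have h1 := (hD.comp hmf_tendsto).norm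
    rw [norm_zero] at h1
    exact h1.congr fun n => rfl
  -- transition points are asymptotically fixed by both operators
  have htrans : ∀ i, i = 1 ∨ i = 2 →
      Tendsto (fun n => ‖seq (mf n) - T i (seq (mf n))‖) atTop (𝓝 0) := by
    intro i hi
    have hbound : ∀ n, ‖seq (mf n) - T i (seq (mf n))‖ ≤
        ‖seq (mf n) - seq (mf n - 1)‖ + ‖seq (mf n + 1) - seq (mf n)‖ := by
      intro n
      have hcases : i = h n ∨ i = h (mf n) := by
        have e1 := hrange n
        have e2 := hrange (mf n)
        have e3 := (hmf_spec n).2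
        rcases hi with rfl | rfl <;> omega
      rcases hcases with he | he
      · have hb1 : h (mf n - 1) = h n :=
          hmf_block n (mf n - 1) (by have := (hmf_spec n).1; omega)
            (by have := (hmf_spec n).1; omega)
        have hs : seq (mf n) = T (h n) (seq (mf n - 1)) := by
          have h1 : mf n = (mf n - 1) + 1 := by have := (hmf_spec n).1; omega
          conv_lhs => rw [h1]
          rw [hseq, hb1]
        have hkey : ‖seq (mf n) - T i (seq (mf n))‖ ≤ ‖seq (mf n - 1) - seq (mf n)‖ := by
          rw [he, hs]
          exact hTne (h n) (hrange n) _ _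
        calc ‖seq (mf n) - T i (seq (mf n))‖ ≤ ‖seq (mf n - 1) - seq (mf n)‖ := hkey
          _ = ‖seq (mf n) - seq (mf n - 1)‖ := norm_sub_rev _ _
          _ ≤ _ := le_add_of_nonneg_right (norm_nonneg _)
      · have hTi : T i (seq (mf n)) = seq (mf n + 1) := by rw [he, ← hseq]
        rw [hTi]
        calc ‖seq (mf n) - seq (mf n + 1)‖ = ‖seq (mf n + 1) - seq (mf n)‖ := norm_sub_rev _ _
          _ ≤ _ := le_add_of_nonneg_left (norm_nonneg _)
    exact squeeze_zero (fun n => norm_nonneg _) hbound (by simpa using hD1.add hD2)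
  -- common fixed points from weak limits of transition points
  have hdemi : ∀ (𝒱 : Ultrafilter ℕ), (𝒱 : Filter ℕ) ≤ atTop →
      ∀ w : H, (∀ y, Tendsto (fun n => ⟪seq (mf n), y⟫) (𝒱 : Filter ℕ) (𝓝 ⟪w, y⟫)) →
      T 1 w = w ∧ T 2 w = w := by
    intro 𝒱 h𝒱 w hw
    constructor
    · exact demiclosed (T 1) hT1.1 w (fun n => seq (mf n)) (C + ‖w‖)
        (fun n => (norm_sub_le _ _).trans (add_le_add (hC _) le_rfl)) 𝒱 hw
        ((htrans 1 (Or.inl rfl)).mono_left h𝒱)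
    · exact demiclosed (T 2) hT2.1 w (fun n => seq (mf n)) (C + ‖w‖)
        (fun n => (norm_sub_le _ _).trans (add_le_add (hC _) le_rfl)) 𝒱 hw
        ((htrans 2 (Or.inr rfl)).mono_left h𝒱)
  -- expansion limit helper
  have expand_lim : ∀ (v : ℕ → H) (l : Filter ℕ) (a b e : H) (c : ℝ),
      (∀ y, Tendsto (fun n => ⟪v n, y⟫) l (𝓝 ⟪a, y⟫)) →
      Tendsto (fun n => ‖v n - b‖) l (𝓝 c) →
      Tendsto (fun n => ‖v n - e‖ ^ 2) l
        (𝓝 (c ^ 2 + 2 * ⟪a - b, b - e⟫ + ‖b - e‖ ^ 2)) := by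
    intro v l a b e c hwv hnv
    have h1 : Tendsto (fun n => ‖v n - b‖ ^ 2) l (𝓝 (c ^ 2)) := hnv.pow 2
    have h2 : Tendsto (fun n => ⟪v n - b, b - e⟫) l (𝓝 ⟪a - b, b - e⟫) := by
      have h0 := (hwv (b - e)).sub_const ⟪b, b - e⟫
      have he : ⟪a, b - e⟫ - ⟪b, b - e⟫ = ⟪a - b, b - e⟫ := (inner_sub_left _ _ _).symm
      rw [he] at h0
      exact h0.congr fun n => (inner_sub_left _ _ _).symm
    have h4 : Tendsto (fun n => ‖v n - b‖ ^ 2 + 2 * ⟪v n - b, b - e⟫ + ‖b - e‖ ^ 2) l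
        (𝓝 (c ^ 2 + 2 * ⟪a - b, b - e⟫ + ‖b - e‖ ^ 2)) :=
      (h1.add (h2.const_mul 2)).add tendsto_const_nhds
    exact h4.congr fun n => (expand_sq (v n) b e).symm
  -- the candidate limit point
  set 𝒰₀ : Ultrafilter ℕ := Ultrafilter.of atTop with h𝒰₀def
  have h𝒰₀ : (𝒰₀ : Filter ℕ) ≤ atTop := Ultrafilter.of_le _
  obtain ⟨p, hp⟩ := exists_weak_lim (fun n => seq (mf n)) C (fun n => hC _) 𝒰₀
  obtain ⟨hp1, hp2⟩ := hdemi 𝒰₀ h𝒰₀ p hp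
  obtain ⟨cp, hcp⟩ := hdist p hp1 hp2
  have main : ∀ y : H, Tendsto (fun n => ⟪seq n, y⟫) atTop (𝓝 ⟪p, y⟫) := by
    intro y
    by_contra hcon
    rw [Metric.tendsto_atTop] at hcon
    push_neg at hcon
    obtain ⟨ε, hε, hcon⟩ := hcon
    set S : Set ℕ := {n | ε ≤ dist ⟪seq n, y⟫ ⟪p, y⟫} with hSdef
    have hSinf : S.Infinite := by
      rw [← Nat.frequently_atTop_iff_infinite]
      rw [Filter.frequently_atTop]
      intro a
      obtain ⟨n, hn, hd⟩ := hcon a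
      exact ⟨n, hn, hd⟩
    have hsplit : (S ∩ {n | h n = 1}).Infinite ∨ (S ∩ {n | h n = 2}).Infinite := by
      by_contra hcc
      push_neg at hcc
      have hsub : S ⊆ (S ∩ {n | h n = 1}) ∪ (S ∩ {n | h n = 2}) := by
        intro n hn
        rcases hrange n with e | e
        · exact Or.inl ⟨hn, e⟩
        · exact Or.inr ⟨hn, e⟩
      exact hSinf (Set.Finite.subset (hcc.1.union
        hcc.2) hsub)
    obtain ⟨i₀, hi₀or, hS'⟩ : ∃ i₀, (i₀ = 1 ∨ i₀ = 2) ∧ (S ∩ {n | h n = i₀}).Infinite := by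
      rcases hsplit with hs | hs
      exacts [⟨1, Or.inl rfl, hs⟩, ⟨2, Or.inr rfl, hs⟩]
    set S' : Set ℕ := S ∩ {n | h n = i₀} with hS'def
    haveI hne𝒰 : (atTop ⊓ 𝓟 S').NeBot := by
      rw [← Nat.cofinite_eq_atTop]
      exact hS'.cofinite_inf_principal_neBot
    set 𝒰 : Ultrafilter ℕ := Ultrafilter.of (atTop ⊓ 𝓟 S') with h𝒰def
    have h𝒰 : (𝒰 : Filter ℕ) ≤ atTop := (Ultrafilter.of_le _).trans inf_le_left
    have hS'mem : S' ∈ (𝒰 : Filter ℕ) :=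
      le_principal_iff.mp ((Ultrafilter.of_le _).trans inf_le_right)
    obtain ⟨q, hq⟩ := exists_weak_lim seq C hC 𝒰
    obtain ⟨w, hw⟩ := exists_weak_lim (fun n => seq (mf n)) C (fun n => hC _) 𝒰
    obtain ⟨hw1, hw2⟩ := hdemi 𝒰 h𝒰 w hw
    obtain ⟨cw, hcw⟩ := hdist w hw1 hw2
    -- w = p (Opial-type uniqueness)
    have hwp : w = p := by
      have A1 : Tendsto (fun n => ‖seq (mf n) - w‖ ^ 2) (𝒰₀ : Filter ℕ)
          (𝓝 (cp ^ 2 + 2 * ⟪p - p, p - w⟫ + ‖p - w‖ ^ 2)) :=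
        expand_lim (fun n => seq (mf n)) 𝒰₀ p p w cp hp
          ((hcp.comp hmf_tendsto).mono_left h𝒰₀)
      have A2 : Tendsto (fun n => ‖seq (mf n) - w‖ ^ 2) (𝒰₀ : Filter ℕ) (𝓝 (cw ^ 2)) :=
        ((hcw.comp hmf_tendsto).mono_left h𝒰₀).pow 2
      have e1 : cw ^ 2 = cp ^ 2 + 2 * ⟪p - p, p - w⟫ + ‖p - w‖ ^ 2 :=
        tendsto_nhds_unique A2 A1
      have B1 : Tendsto (fun n => ‖seq (mf n) - p‖ ^ 2) (𝒰 : Filter ℕ)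
          (𝓝 (cw ^ 2 + 2 * ⟪w - w, w - p⟫ + ‖w - p‖ ^ 2)) :=
        expand_lim (fun n => seq (mf n)) 𝒰 w w p cw hw
          ((hcw.comp hmf_tendsto).mono_left h𝒰)
      have B2 : Tendsto (fun n => ‖seq (mf n) - p‖ ^ 2) (𝒰 : Filter ℕ) (𝓝 (cp ^ 2)) :=
        ((hcp.comp hmf_tendsto).mono_left h𝒰).pow 2
      have e2 : cp ^ 2 = cw ^ 2 + 2 * ⟪w - w, w - p⟫ + ‖w - p‖ ^ 2 :=
        tendsto_nhds_unique B2 B1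
      have hz1' : ⟪p - p, p - w⟫ = (0 : ℝ) := by simp
      have hz2' : ⟪w - w, w - p⟫ = (0 : ℝ) := by simp
      have hrev : ‖w - p‖ = ‖p - w‖ := norm_sub_rev _ _
      have hsq : ‖p - w‖ ^ 2 = 0 := by nlinarith [sq_nonneg (‖p - w‖)]
      have : p - w = 0 := norm_eq_zero.mp (pow_eq_zero_iff two_ne_zero |>.mp hsq)
      exact (sub_eq_zero.mp this).symm
    -- q is fixed by T i₀
    have hfq : Tendsto (fun n => ‖seq n - T i₀ (seq n)‖) (𝒰 : Filter ℕ) (𝓝 0) := by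
      have hbase : Tendsto (fun n => ‖seq n - seq (n + 1)‖) atTop (𝓝 0) := by
        have h1 := hD.norm
        rw [norm_zero] at h1
        exact h1.congr fun n => norm_sub_rev _ _
      refine Tendsto.congr' ?_ (hbase.mono_left h𝒰)
      refine Filter.eventuallyEq_of_mem hS'mem fun n hn => ?_
      have e : h n = i₀ := hn.2
      rw [hseq n, e]
    have hqfix : T i₀ q = q :=
      demiclosed (T i₀) (hTne i₀ hi₀or) q seq (C + ‖q‖)
        (fun n => (norm_sub_le _ _).trans (add_le_add (hC _) le_rfl)) 𝒰 hq hfq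
    -- block monotonicity from points of S' to the next transition
    have hBA : ∀ᶠ n in (𝒰 : Filter ℕ), ‖seq (mf n) - q‖ ^ 2 ≤ ‖seq n - q‖ ^ 2 := by
      refine Filter.mem_of_superset hS'mem fun n hn => ?_
      have e : h n = i₀ := hn.2
      have hmono : ‖seq (mf n) - q‖ ≤ ‖seq n - q‖ := by
        refine block_mono q i₀ hqfix (mf n) n (hmf_spec n).1.le fun j hj1 hj2 => ?_
        rw [hmf_block n j hj1 hj2, e]
      exact pow_le_pow_left₀ (norm_nonneg _) hmono 2
    have A_lim : Tendsto (fun n => ‖seq n - q‖ ^ 2) (𝒰 : Filter ℕ)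
        (𝓝 (cp ^ 2 + 2 * ⟪q - p, p - q⟫ + ‖p - q‖ ^ 2)) :=
      expand_lim seq 𝒰 q p q cp hq (hcp.mono_left h𝒰)
    have B_lim : Tendsto (fun n => ‖seq (mf n) - q‖ ^ 2) (𝒰 : Filter ℕ)
        (𝓝 (cp ^ 2 + 2 * ⟪w - p, p - q⟫ + ‖p - q‖ ^ 2)) :=
      expand_lim (fun n => seq (mf n)) 𝒰 w p q cp hw
        ((hcp.comp hmf_tendsto).mono_left h𝒰)
    have hABle : cp ^ 2 + 2 * ⟪w - p, p - q⟫ + ‖p - q‖ ^ 2 ≤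
        cp ^ 2 + 2 * ⟪q - p, p - q⟫ + ‖p - q‖ ^ 2 :=
      le_of_tendsto_of_tendsto B_lim A_lim hBA
    have hz3 : ⟪w - p, p - q⟫ = (0 : ℝ) := by rw [hwp]; simp
    have hz4 : ⟪q - p, p - q⟫ = -‖p - q‖ ^ 2 := by
      have hrw : q - p = -(p - q) := by abel
      rw [hrw, inner_neg_left, real_inner_self_eq_norm_sq]
    have hsq : ‖p - q‖ ^ 2 = 0 := by nlinarith [sq_nonneg (‖p - q‖)]
    have hpq : p - q = 0 := norm_eq_zero.mp (pow_eq_zero_iff two_ne_zero |>.mp hsq)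
    have hqp : q = p := (sub_eq_zero.mp hpq).symm
    -- contradiction with n ∈ S
    have hdist𝒰 : Tendsto (fun n => dist ⟪seq n, y⟫ ⟪p, y⟫) (𝒰 : Filter ℕ)
        (𝓝 (dist ⟪q, y⟫ ⟪p, y⟫)) :=
      (hq y).dist tendsto_const_nhds
    rw [hqp, dist_self] at hdist𝒰
    have hfinal : ε ≤ 0 :=
      ge_of_tendsto hdist𝒰 (Filter.mem_of_superset hS'mem fun n hn => hn.1)
    linarith
  refine ⟨p, ⟨hp1, hp2⟩, ?_⟩
  intro y
  have h1 := (main y).comp (tendsto_add_atTop_nat 1)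
  exact h1.congr fun n => rfl
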